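/- arXiv:2009.05075 — 2 statements merged into one kernel-verified Lean document; each statement's English description precedes it below -/
import Mathlib

section
/- Let φ, ψ : ℝ → ℝ be real-valued integrable functions such that |φ̂(ω)|² + Σ_{j=0}^{∞} |ψ̂(2^{−j} ω)|² = 1 for almost every ω ∈ ℝ. Fix an integer J and write F_J(t) = |φ̂(2^{−J} t)|² and G_j(t) = |ψ̂(2^{−j} t)|². Then for almost every ξ ∈ ℝ²: (1/(2π)) ∫₀^{2π} [ F_J(⟨ξ,u_θ⟩) F_J(⟨ξ,v_θ⟩) + 2 Σ_{j=J}^{∞} F_J(⟨ξ,u_θ⟩) G_j(⟨ξ,v_θ⟩) + Σ_{j=J}^{∞} Σ_{k=J}^{∞} G_j(⟨ξ,u_θ⟩) G_k(⟨ξ,v_θ⟩) ] dθ = 1, where the 'horizontal' and 'vertical' mixed terms have been combined into a single sum with factor 2 using the angular symmetry θ ↦ θ + π/2 and the evenness of F_J and G_j (which holds since φ and ψ are real-valued). -/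
open MeasureTheory Real RealInnerProductSpace

/-- The unit vector u_θ = (cos θ, sin θ) in ℝ². -/
noncomputable def uVec (θ : ℝ) : EuclideanSpace ℝ (Fin 2) :=
  (WithLp.equiv 2 (Fin 2 → ℝ)).symm ![Real.cos θ, Real.sin θ]

/-- The unit vector v_θ = u_{θ+π/2} = (−sin θ, cos θ) in ℝ². -/
noncomputable def vVec (θ : ℝ) : EuclideanSpace ℝ (Fin 2) :=
  (WithLp.equiv 2 (Fin 2 → ℝ)).symm ![-Real.sin θ, Real.cos θ]

/-- The radialization η²(x) = (1/(2π)) ∫₀^{2π} η(⟨x,u_θ⟩) η(⟨x,v_θ⟩) dθ. -/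
noncomputable def radialization (η : ℝ → ℝ) (x : EuclideanSpace ℝ (Fin 2)) : ℝ :=
  (1 / (2 * π)) * ∫ θ in (0:ℝ)..(2 * π), η ⟪x, uVec θ⟫ * η ⟪x, vVec θ⟫

open FourierTransform

/-- F_J(t) = |φ̂(2^{−J} t)|². -/
noncomputable def FJ (φ : ℝ → ℝ) (J : ℤ) (t : ℝ) : ℝ :=
  ‖𝓕 (fun x : ℝ => (φ x : ℂ)) ((2:ℝ) ^ (-J) * t)‖ ^ 2

/-- G_j(t) = |ψ̂(2^{−j} t)|². -/
noncomputable def Gj (ψ : ℝ → ℝ) (j : ℤ) (t : ℝ) : ℝ :=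
  ‖𝓕 (fun x : ℝ => (ψ x : ℂ)) ((2:ℝ) ^ (-j) * t)‖ ^ 2

lemma inner_uVec (ξ : EuclideanSpace ℝ (Fin 2)) (θ : ℝ) :
    ⟪ξ, uVec θ⟫ = ξ 0 * Real.cos θ + ξ 1 * Real.sin θ := by
  simp [uVec, PiLp.inner_apply, Fin.sum_univ_two, WithLp.equiv_symm_apply,
    RCLike.inner_apply, mul_comm]

lemma inner_vVec (ξ : EuclideanSpace ℝ (Fin 2)) (θ : ℝ) :
    ⟪ξ, vVec θ⟫ = ξ 0 * (-Real.sin θ) + ξ 1 * Real.cos θ := by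
  simp [vVec, PiLp.inner_apply, Fin.sum_univ_two, WithLp.equiv_symm_apply,
    RCLike.inner_apply, mul_comm]

lemma uVec_add_pi_div_two (θ : ℝ) : uVec (θ + π / 2) = vVec θ := by
  unfold uVec vVec
  congr 1
  ext i
  fin_cases i <;> simp [Real.cos_add, Real.sin_add]

/-- continuity of `FJ`. -/
lemma FJ_continuous (φ : ℝ → ℝ) (hφ : Integrable φ volume) (J : ℤ) :
    Continuous (FJ φ J) := by
  have hFT : Continuous (𝓕 (fun x : ℝ => (φ x : ℂ))) := by
    refine VectorFourier.fourierIntegral_continuous Real.continuous_fourierChar ?_ hφ.ofReal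
    exact continuous_inner
  exact ((hFT.comp (continuous_const.mul continuous_id)).norm.pow 2)

/-- key slice lemma: a null set of ℝ pulled back to ℝ² along a nonzero direction is null. -/
lemma slice_null (N : Set ℝ) (hN : MeasurableSet N) (h0 : volume N = 0)
    (a b : ℝ) (hab : a ^ 2 + b ^ 2 = 1) :
    volume {ξ : EuclideanSpace ℝ (Fin 2) | ξ 0 * a + ξ 1 * b ∈ N} = 0 := by
  have hmp := (volume_preserving_finTwoArrow ℝ).comp
    (EuclideanSpace.volume_preserving_symm_measurableEquiv_toLp (Fin 2))
  have hSmeas : MeasurableSet {p : ℝ × ℝ | p.1 * a + p.2 * b ∈ N} :=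
    hN.preimage (by fun_prop)
  have hS0 : volume {p : ℝ × ℝ | p.1 * a + p.2 * b ∈ N} = 0 := by
    rcases eq_or_ne b 0 with hb | hb
    · have ha : a ≠ 0 := by
        intro h; rw [h, hb] at hab; norm_num at hab
      have : {p : ℝ × ℝ | p.1 * a + p.2 * b ∈ N} = ((· * a) ⁻¹' N) ×ˢ Set.univ := by
        ext p; simp [hb]
      rw [this, Measure.volume_eq_prod, Measure.prod_prod, Real.volume_preimage_mul_right ha, h0,
        mul_zero, zero_mul]
    · rw [Measure.volume_eq_prod, Measure.measure_prod_null hSmeas]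
      refine Filter.Eventually.of_forall fun x => ?_
      have h1 : (Prod.mk x ⁻¹' {p : ℝ × ℝ | p.1 * a + p.2 * b ∈ N})
          = (· * b) ⁻¹' ((x * a + ·) ⁻¹' N) := rfl
      have h2 : volume (Prod.mk x ⁻¹' {p : ℝ × ℝ | p.1 * a + p.2 * b ∈ N}) = 0 := by
        rw [h1, Real.volume_preimage_mul_right hb, measure_preimage_add, h0, mul_zero]
      simpa using h2
  have hset : {ξ : EuclideanSpace ℝ (Fin 2) | ξ 0 * a + ξ 1 * b ∈ N}
      = ((MeasurableEquiv.finTwoArrow) ∘ (MeasurableEquiv.toLp 2 (Fin 2 → ℝ)).symm) ⁻¹'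
        {p : ℝ × ℝ | p.1 * a + p.2 * b ∈ N} := rfl
  rw [hset, hmp.measure_preimage hSmeas.nullMeasurableSet]
  exact hS0

/-- for real-valued integrable φ, ψ with
|φ̂(ω)|² + Σ_{j=0}^∞ |ψ̂(2^{−j}ω)|² = 1 a.e. and any integer J, for a.e. ξ ∈ ℝ² the
angularly averaged product expansion, with the two mixed terms combined into a single sum
with factor 2, equals 1. -/
theorem product_partition_angular_average (φ ψ : ℝ → ℝ)
    (hφ : Integrable φ volume) (hψ : Integrable ψ volume)
    (hMRA : ∀ᵐ ω : ℝ, Summable (fun j : ℕ => Gj ψ (j:ℤ) ω) ∧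
      FJ φ 0 ω + ∑' j : ℕ, Gj ψ (j:ℤ) ω = 1) (J : ℤ) :
    ∀ᵐ ξ : EuclideanSpace ℝ (Fin 2),
      (1 / (2 * π)) * ∫ θ in (0:ℝ)..(2 * π),
        (FJ φ J ⟪ξ, uVec θ⟫ * FJ φ J ⟪ξ, vVec θ⟫
          + 2 * (∑' n : ℕ, FJ φ J ⟪ξ, uVec θ⟫ * Gj ψ (J + n) ⟪ξ, vVec θ⟫)
          + (∑' n : ℕ, ∑' m : ℕ,
              Gj ψ (J + n) ⟪ξ, uVec θ⟫ * Gj ψ (J + m) ⟪ξ, vVec θ⟫)) = 1 := by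
  classical
  -- the bad set and a measurable null superset
  set B : Set ℝ := {ω | ¬ (Summable (fun j : ℕ => Gj ψ (j:ℤ) ω) ∧
      FJ φ 0 ω + ∑' j : ℕ, Gj ψ (j:ℤ) ω = 1)} with hBdef
  have hB : volume B = 0 := hMRA
  set M := toMeasurable volume B with hMdef
  have hMmeas : MeasurableSet M := measurableSet_toMeasurable _ _
  have hM0 : volume M = 0 := by rw [hMdef, measure_toMeasurable]; exact hB
  have hMgood : ∀ t, t ∉ M → Summable (fun j : ℕ => Gj ψ (j:ℤ) t) ∧
      FJ φ 0 t + ∑' j : ℕ, Gj ψ (j:ℤ) t = 1 := by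
    intro t ht
    by_contra h
    exact ht (subset_toMeasurable _ _ h)
  -- the rescaled null set
  set c : ℝ := (2:ℝ) ^ (-J) with hcdef
  have hc : c ≠ 0 := zpow_ne_zero _ two_ne_zero
  set N : Set ℝ := (fun t => c * t) ⁻¹' M with hNdef
  have hNmeas : MeasurableSet N := hMmeas.preimage (by fun_prop)
  have hN0 : volume N = 0 := by
    rw [hNdef, Real.volume_preimage_mul_left hc, hM0, mul_zero]
  have hNgood : ∀ t, t ∉ N → Summable (fun n : ℕ => Gj ψ (J + n) t) ∧
      FJ φ J t + ∑' n : ℕ, Gj ψ (J + n) t = 1 := by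
    intro t ht
    obtain ⟨h1, h2⟩ := hMgood (c * t) ht
    have hG : (fun n : ℕ => Gj ψ (J + n) t) = fun n : ℕ => Gj ψ (n:ℤ) (c * t) := by
      funext n
      unfold Gj
      congr 2
      rw [hcdef, neg_add, zpow_add₀ (two_ne_zero (α := ℝ))]
      ring
    have hFeq : FJ φ J t = FJ φ 0 (c * t) := by
      unfold FJ
      congr 1
      rw [hcdef]
      norm_num
    rw [hG, hFeq]
    exact ⟨h1, h2⟩
  -- Fubini: almost every ξ, almost every θ, both inner products avoid N
  have main : ∀ᵐ ξ : EuclideanSpace ℝ (Fin 2), ∀ᵐ θ : ℝ,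
      ⟪ξ, uVec θ⟫ ∉ N ∧ ⟪ξ, vVec θ⟫ ∉ N := by
    set A' : Set (ℝ × EuclideanSpace ℝ (Fin 2)) :=
      {p | ⟪p.2, uVec p.1⟫ ∈ N ∨ ⟪p.2, vVec p.1⟫ ∈ N} with hA'def
    have hcontu : Continuous fun p : ℝ × EuclideanSpace ℝ (Fin 2) => ⟪p.2, uVec p.1⟫ := by
      have : (fun p : ℝ × EuclideanSpace ℝ (Fin 2) => ⟪p.2, uVec p.1⟫)
          = fun p => p.2 0 * Real.cos p.1 + p.2 1 * Real.sin p.1 := by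
        funext p; rw [inner_uVec]
      rw [this]
      fun_prop
    have hcontv : Continuous fun p : ℝ × EuclideanSpace ℝ (Fin 2) => ⟪p.2, vVec p.1⟫ := by
      have : (fun p : ℝ × EuclideanSpace ℝ (Fin 2) => ⟪p.2, vVec p.1⟫)
          = fun p => p.2 0 * (-Real.sin p.1) + p.2 1 * Real.cos p.1 := by
        funext p; rw [inner_vVec]
      rw [this]
      fun_prop
    have hA'meas : MeasurableSet A' := by
      refine MeasurableSet.union ?_ ?_
      · exact hNmeas.preimage hcontu.measurable
      · exact hNmeas.preimage hcontv.measurable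
    have hA'0 : (volume : Measure (ℝ × EuclideanSpace ℝ (Fin 2))) A' = 0 := by
      rw [Measure.volume_eq_prod, Measure.measure_prod_null hA'meas]
      refine Filter.Eventually.of_forall fun θ => ?_
      have hsub : (Prod.mk θ ⁻¹' A') ⊆
          {ξ : EuclideanSpace ℝ (Fin 2) | ξ 0 * Real.cos θ + ξ 1 * Real.sin θ ∈ N}
          ∪ {ξ : EuclideanSpace ℝ (Fin 2) | ξ 0 * (-Real.sin θ) + ξ 1 * Real.cos θ ∈ N} := by
        intro ξ hξ
        rcases hξ with h | h
        · left; rwa [Set.mem_setOf_eq, ← inner_uVec]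
        · right; rwa [Set.mem_setOf_eq, ← inner_vVec]
      refine le_antisymm (le_trans (measure_mono hsub) ?_) (zero_le)
      refine le_trans (measure_union_le _ _) ?_
      rw [slice_null N hNmeas hN0 _ _ (by
        simpa using Real.sin_sq_add_cos_sq θ ▸ (by ring_nf; exact Real.cos_sq_add_sin_sq θ)),
        slice_null N hNmeas hN0 _ _ (by
          have := Real.sin_sq_add_cos_sq θ; nlinarith)]
      simp
    -- transfer to the product in the other order
    set A : Set (EuclideanSpace ℝ (Fin 2) × ℝ) := Prod.swap ⁻¹' A' with hAdef
    have hA0 : (volume : Measure (EuclideanSpace ℝ (Fin 2) × ℝ)) A = 0 := by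
      rw [hAdef, Measure.volume_eq_prod]
      have : (volume.prod volume) (Prod.swap ⁻¹' A')
          = Measure.map Prod.swap (volume.prod volume) A' := by
        rw [Measure.map_apply measurable_swap hA'meas]
      rw [this, Measure.prod_swap, ← Measure.volume_eq_prod]
      exact hA'0
    have hae : ∀ᵐ p : EuclideanSpace ℝ (Fin 2) × ℝ, p ∉ A := by
      rw [ae_iff]
      simpa using hA0
    rw [Measure.volume_eq_prod] at hae
    refine (Measure.ae_ae_of_ae_prod hae).mono fun ξ hξ => hξ.mono fun θ hθ => ?_
    simp only [hAdef, Set.mem_preimage, hA'def, Set.mem_setOf_eq, Prod.swap_prod_mk] at hθ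
    push_neg at hθ
    exact hθ
  -- continuity facts
  have hF : Continuous (FJ φ J) := FJ_continuous φ hφ J
  -- main pointwise computation for a.e. ξ
  filter_upwards [main] with ξ hξ
  set g : ℝ → ℝ := fun θ => FJ φ J ⟪ξ, uVec θ⟫ with hgdef
  have hginn : ∀ θ, g θ = FJ φ J (ξ 0 * Real.cos θ + ξ 1 * Real.sin θ) := fun θ => by
    rw [hgdef]; simp only [inner_uVec]
  have hgcont : Continuous g := by
    have : g = fun θ => FJ φ J (ξ 0 * Real.cos θ + ξ 1 * Real.sin θ) := funext hginn
    rw [this]; fun_prop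
  have hgv : ∀ θ, FJ φ J ⟪ξ, vVec θ⟫ = g (θ + π / 2) := by
    intro θ
    rw [hgdef]
    simp only [uVec_add_pi_div_two]
  have hper : Function.Periodic g (2 * π) := by
    intro θ
    rw [hginn, hginn]
    simp [Real.cos_add_two_pi, Real.sin_add_two_pi]
  -- pointwise identity a.e. in θ
  have hpt : ∀ᵐ θ : ℝ,
      (FJ φ J ⟪ξ, uVec θ⟫ * FJ φ J ⟪ξ, vVec θ⟫
        + 2 * (∑' n : ℕ, FJ φ J ⟪ξ, uVec θ⟫ * Gj ψ (J + n) ⟪ξ, vVec θ⟫)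
        + (∑' n : ℕ, ∑' m : ℕ,
            Gj ψ (J + n) ⟪ξ, uVec θ⟫ * Gj ψ (J + m) ⟪ξ, vVec θ⟫))
      = 1 + g θ - g (θ + π / 2) := by
    filter_upwards [hξ] with θ hθ
    obtain ⟨hu, hv⟩ := hθ
    obtain ⟨hsu, hequ⟩ := hNgood _ hu
    obtain ⟨hsv, heqv⟩ := hNgood _ hv
    have h1 : (∑' n : ℕ, FJ φ J ⟪ξ, uVec θ⟫ * Gj ψ (J + n) ⟪ξ, vVec θ⟫)
        = FJ φ J ⟪ξ, uVec θ⟫ * ∑' n : ℕ, Gj ψ (J + n) ⟪ξ, vVec θ⟫ := tsum_mul_left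
    have h2 : (∑' n : ℕ, ∑' m : ℕ, Gj ψ (J + n) ⟪ξ, uVec θ⟫ * Gj ψ (J + m) ⟪ξ, vVec θ⟫)
        = (∑' n : ℕ, Gj ψ (J + n) ⟪ξ, uVec θ⟫) * (∑' m : ℕ, Gj ψ (J + m) ⟪ξ, vVec θ⟫) := by
      have : ∀ n : ℕ, (∑' m : ℕ, Gj ψ (J + n) ⟪ξ, uVec θ⟫ * Gj ψ (J + m) ⟪ξ, vVec θ⟫)
          = Gj ψ (J + n) ⟪ξ, uVec θ⟫ * ∑' m : ℕ, Gj ψ (J + m) ⟪ξ, vVec θ⟫ :=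
        fun n => tsum_mul_left
      rw [tsum_congr this, tsum_mul_right]
    have hga : FJ φ J ⟪ξ, uVec θ⟫ = g θ := rfl
    rw [h1, h2, hga, hgv θ]
    set Fa := g θ
    set Fb := g (θ + π / 2)
    set Sa := ∑' n : ℕ, Gj ψ (J + n) ⟪ξ, uVec θ⟫
    set Sb := ∑' m : ℕ, Gj ψ (J + m) ⟪ξ, vVec θ⟫
    have hA : Fa + Sa = 1 := hequ
    have hBb : Fb + Sb = 1 := by
      have h3 := heqv
      rw [hgv θ] at h3
      exact h3
    have hSa : Sa = 1 - Fa := by linarith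
    have hSb : Sb = 1 - Fb := by linarith
    rw [hSa, hSb]; ring
  -- replace the integrand a.e.
  have hInt : (∫ θ in (0:ℝ)..(2 * π),
      (FJ φ J ⟪ξ, uVec θ⟫ * FJ φ J ⟪ξ, vVec θ⟫
        + 2 * (∑' n : ℕ, FJ φ J ⟪ξ, uVec θ⟫ * Gj ψ (J + n) ⟪ξ, vVec θ⟫)
        + (∑' n : ℕ, ∑' m : ℕ,
            Gj ψ (J + n) ⟪ξ, uVec θ⟫ * Gj ψ (J + m) ⟪ξ, vVec θ⟫)))
      = ∫ θ in (0:ℝ)..(2 * π), (1 + g θ - g (θ + π / 2)) := by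
    apply intervalIntegral.integral_congr_ae
    exact hpt.mono fun θ h _ => h
  rw [hInt]
  have hI1 : IntervalIntegrable (fun θ => 1 + g θ) volume 0 (2 * π) :=
    (continuous_const.add hgcont).intervalIntegrable _ _
  have hI2 : IntervalIntegrable (fun θ => g (θ + π / 2)) volume 0 (2 * π) :=
    (hgcont.comp (continuous_id.add continuous_const)).intervalIntegrable _ _
  have hIg : IntervalIntegrable g volume 0 (2 * π) := hgcont.intervalIntegrable _ _
  have hsplit : (∫ θ in (0:ℝ)..(2 * π), (1 + g θ - g (θ + π / 2)))
      = (∫ θ in (0:ℝ)..(2 * π), (1 + g θ)) - ∫ θ in (0:ℝ)..(2 * π), g (θ + π / 2) :=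
    intervalIntegral.integral_sub hI1 hI2
  have hshift : (∫ θ in (0:ℝ)..(2 * π), g (θ + π / 2)) = ∫ θ in (0:ℝ)..(2 * π), g θ := by
    rw [intervalIntegral.integral_comp_add_right g (π / 2)]
    have h := hper.intervalIntegral_add_eq (π / 2) 0
    rw [zero_add] at h
    rw [show (0:ℝ) + π / 2 = π / 2 by ring, show (2 * π + π / 2 : ℝ) = π / 2 + 2 * π by ring]
    exact h
  have hone : (∫ θ in (0:ℝ)..(2 * π), (1 + g θ))
      = 2 * π + ∫ θ in (0:ℝ)..(2 * π), g θ := by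
    rw [intervalIntegral.integral_add (intervalIntegrable_const) hIg]
    simp
  rw [hsplit, hshift, hone]
  have hπ : (2 * π : ℝ) ≠ 0 := by positivity
  field_simp
  ring
end

section
/- Fourier slice theorem: let f : ℝ² → ℂ be integrable. For θ ∈ ℝ, define the Radon projection R_θ f : ℝ → ℂ by R_θ f(t) = ∫_ℝ f(t·u_θ + s·v_θ) ds where u_θ = (cos θ, sin θ) and v_θ = (−sin θ, cos θ). Then for almost every t ∈ ℝ the integral defining R_θ f(t) converges, R_θ f is integrable on ℝ, and for every r ∈ ℝ the one-dimensional Fourier transform of R_θ f satisfies (R_θ f)^(r) = f̂(r·u_θ), where f̂ is the two-dimensional Fourier transform of f. -/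
open MeasureTheory Real RealInnerProductSpace

open FourierTransform

/-- The Radon projection R_θ f(t) = ∫ f(t u_θ + s v_θ) ds. -/
noncomputable def radon (f : EuclideanSpace ℝ (Fin 2) → ℂ) (θ : ℝ) (t : ℝ) : ℂ :=
  ∫ s : ℝ, f (t • uVec θ + s • vVec θ)

lemma uvOrtho (θ : ℝ) : Orthonormal ℝ ![uVec θ, vVec θ] := by
  rw [orthonormal_iff_ite]
  intro i j
  fin_cases i <;> fin_cases j <;>
    simp [uVec, vVec, PiLp.inner_apply, Fin.sum_univ_two, RCLike.inner_apply, conj_trivial] <;>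
    ring_nf <;> simp [EuclideanSpace.norm_eq, Fin.sum_univ_two, sin_sq_add_cos_sq, cos_sq_add_sin_sq]

noncomputable def onb (θ : ℝ) : OrthonormalBasis (Fin 2) ℝ (EuclideanSpace ℝ (Fin 2)) :=
  (basisOfOrthonormalOfCardEqFinrank (uvOrtho θ)
    (by simp [finrank_euclideanSpace])).toOrthonormalBasis
    (by rw [coe_basisOfOrthonormalOfCardEqFinrank]; exact uvOrtho θ)

lemma onb_apply (θ : ℝ) : ⇑(onb θ) = ![uVec θ, vVec θ] := by
  rw [onb, Module.Basis.coe_toOrthonormalBasis, coe_basisOfOrthonormalOfCardEqFinrank]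

noncomputable def Pmap : (ℝ × ℝ) ≃ᵐ EuclideanSpace ℝ (Fin 2) :=
  (MeasurableEquiv.finTwoArrow).symm.trans (MeasurableEquiv.toLp 2 (Fin 2 → ℝ))

lemma hP : MeasurePreserving Pmap volume volume :=
  ((EuclideanSpace.volume_preserving_symm_measurableEquiv_toLp (Fin 2)).symm).comp
    ((volume_preserving_finTwoArrow ℝ).symm)

noncomputable def Amap (θ : ℝ) :
    EuclideanSpace ℝ (Fin 2) ≃ₗᵢ[ℝ] EuclideanSpace ℝ (Fin 2) := (onb θ).repr.symm

lemma Pmap_apply (p : ℝ × ℝ) (i : Fin 2) : Pmap p i = ![p.1, p.2] i := by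
  simp [Pmap, MeasurableEquiv.finTwoArrow, MeasurableEquiv.toLp]
  rfl

lemma key (θ : ℝ) (t s : ℝ) : Amap θ (Pmap (t, s)) = t • uVec θ + s • vVec θ := by
  have := (onb θ).sum_repr_symm (Pmap (t, s))
  rw [Amap, ← this, Fin.sum_univ_two, Pmap_apply, Pmap_apply, onb_apply]
  simp


/-- Fourier slice theorem: for integrable f : ℝ² → ℂ and any angle θ, the
integral defining R_θ f(t) converges for a.e. t, R_θ f is integrable on ℝ, and the 1D Fourier
transform of R_θ f coincides with the 2D Fourier transform of f along the ray through u_θ. -/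
theorem fourier_slice (f : EuclideanSpace ℝ (Fin 2) → ℂ)
    (hf : Integrable f (volume : Measure (EuclideanSpace ℝ (Fin 2)))) (θ : ℝ) :
    (∀ᵐ t : ℝ, Integrable (fun s : ℝ => f (t • uVec θ + s • vVec θ)) volume) ∧
      Integrable (radon f θ) volume ∧
      ∀ r : ℝ, 𝓕 (radon f θ) r = 𝓕 f (r • uVec θ) := by
  have hA : MeasurePreserving (Amap θ) volume volume :=
    (Amap θ).measurePreserving
  have hg : Integrable (f ∘ Amap θ) volume :=
    (hA.integrable_comp_emb (Amap θ).toHomeomorph.measurableEmbedding).2 hf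
  have hh : Integrable ((f ∘ Amap θ) ∘ Pmap) volume :=
    (hP.integrable_comp_emb Pmap.measurableEmbedding).2 hg
  have hh' : Integrable (fun p : ℝ × ℝ => f (Amap θ (Pmap p)))
      ((volume : Measure ℝ).prod volume) := by
    rwa [← Measure.volume_eq_prod]
  have key2 : ∀ p : ℝ × ℝ, f (Amap θ (Pmap p)) = f (p.1 • uVec θ + p.2 • vVec θ) := by
    rintro ⟨t, s⟩; rw [key]
  refine ⟨?_, ?_, ?_⟩
  · have h1 := hh'.prod_right_ae
    filter_upwards [h1] with t ht
    simpa only [key2] using ht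
  · have h2 := hh'.integral_prod_left
    have : radon f θ = fun t => ∫ s, f (Amap θ (Pmap (t, s))) := by
      funext t; unfold radon; congr 1; funext s; rw [key]
    rw [this]; exact h2
  · intro r
    have hradon : radon f θ = fun t => ∫ s, f (Amap θ (Pmap (t, s))) := by
      funext t; unfold radon; congr 1; funext s; rw [key]
    -- the bilinear form (p, r) ↦ p.1 * r on (ℝ×ℝ) × ℝ
    set L : (ℝ × ℝ) →L[ℝ] ℝ →L[ℝ] ℝ :=
      (ContinuousLinearMap.mul ℝ ℝ).comp (ContinuousLinearMap.fst ℝ ℝ ℝ) with hL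
    have hI : Integrable (fun p : ℝ × ℝ => 𝐞 (-(L p r)) • f (Amap θ (Pmap p)))
        ((volume : Measure ℝ).prod volume) := by
      rw [← Measure.volume_eq_prod]
      exact (Real.fourierIntegral_convergent_iff' L r).2 hh
    calc 𝓕 (radon f θ) r
        = ∫ t : ℝ, 𝐞 (-⟪t, r⟫) • ∫ s : ℝ, f (Amap θ (Pmap (t, s))) := by
          rw [Real.fourier_eq, hradon]
      _ = ∫ t : ℝ, ∫ s : ℝ, 𝐞 (-(L (t, s) r)) • f (Amap θ (Pmap (t, s))) := by
          congr 1; funext t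
          have hLtr : ∀ s : ℝ, L (t, s) r = t * r := fun s => rfl
          simp only [hLtr, Circle.smul_def]
          rw [integral_smul]
          norm_num [RCLike.inner_apply]
          left; rw [mul_comm]
      _ = ∫ p : ℝ × ℝ, 𝐞 (-(L p r)) • f (Amap θ (Pmap p)) := by
          rw [Measure.volume_eq_prod, integral_prod _ hI]
      _ = ∫ x : EuclideanSpace ℝ (Fin 2),
            𝐞 (-⟪x, r • EuclideanSpace.single (0 : Fin 2) (1:ℝ)⟫) • f (Amap θ x) := by
          rw [← hP.integral_comp Pmap.measurableEmbedding]
          congr 1; funext p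
          congr 2
          simp [hL, PiLp.inner_apply, Fin.sum_univ_two, Pmap_apply,
            EuclideanSpace.single_apply, RCLike.inner_apply, conj_trivial]
          ring
      _ = 𝓕 (f ∘ Amap θ) (r • EuclideanSpace.single (0 : Fin 2) (1:ℝ)) := by
          rw [Real.fourier_eq]; rfl
      _ = 𝓕 f (Amap θ (r • EuclideanSpace.single (0 : Fin 2) (1:ℝ))) :=
          Real.fourier_comp_linearIsometry _ _ _
      _ = 𝓕 f (r • uVec θ) := by
          congr 1
          rw [_root_.map_smul]
          congr 1
          rw [Amap]
          congr 1
          rw [(onb θ).repr_symm_single, onb_apply]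
          rfl
end
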